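/- With a, φ, Φ, g, f, R₁ as above, and constants c = (2∫₀^{R₁} Φ(s)/φ(s) ds)^{−1} and ε = min{(2∫₀^{R₁} 1/φ(s) ds)^{−1}, c·Φ(R₁)}, the inequality 2 f''(r) + f'(r) a(r)⁺ ≤ −ε − c Φ(r) ≤ −(ε + c f(r)) holds for all 0 < r < R₁. -/
import Mathlib


open Filter MeasureTheory

theorem f_differential_inequality (a φ Φ g f : ℝ → ℝ) (R₀ R₁ c ε : ℝ)
    (ha : Continuous a) (ha0 : 0 < a 0)
    (hlim : limsup (fun r => a r / r) atTop < 0)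
    (hφ : ∀ r, φ r = Real.exp (-(1/2) * ∫ s in (0:ℝ)..r, max (a s) 0))
    (hΦ : ∀ r, Φ r = ∫ s in (0:ℝ)..r, φ s)
    (hR₀ : R₀ = sInf {R : ℝ | 0 ≤ R ∧ ∀ r ≥ R, a r ≤ 0})
    (hR₁ : R₁ = sInf {R : ℝ | R₀ ≤ R ∧ ∀ r ≥ R, R * (R - R₀) * (a r / r) ≤ -4})
    (hg : ∀ r, g r = 1
        - (1/4) * (∫ s in (0:ℝ)..(min r R₁), Φ s / φ s) /
            (∫ s in (0:ℝ)..R₁, Φ s / φ s)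
        - (1/4) * (∫ s in (0:ℝ)..(min r R₁), 1 / φ s) /
            (∫ s in (0:ℝ)..R₁, 1 / φ s))
    (hf : ∀ r, f r = ∫ s in (0:ℝ)..r, φ s * g s)
    (hc : c = (2 * ∫ s in (0:ℝ)..R₁, Φ s / φ s)⁻¹)
    (hε : ε = min (2 * ∫ s in (0:ℝ)..R₁, 1 / φ s)⁻¹ (c * Φ R₁)) :
    ∀ r, 0 < r → r < R₁ →
      2 * deriv (deriv f) r + deriv f r * max (a r) 0 ≤ -ε - c * Φ r ∧
      -ε - c * Φ r ≤ -(ε + c * f r) := by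
  -- basic objects
  set ap : ℝ → ℝ := fun s => max (a s) 0 with hap
  have hapc : Continuous ap := ha.max continuous_const
  have primHD : ∀ (h : ℝ → ℝ), Continuous h →
      ∀ x, HasDerivAt (fun u => ∫ s in (0:ℝ)..u, h s) (h x) x :=
    fun h hh x => (hh.integral_hasStrictDerivAt 0 x).hasDerivAt
  have primC : ∀ (h : ℝ → ℝ), Continuous h →
      Continuous (fun u => ∫ s in (0:ℝ)..u, h s) := fun h hh =>
    continuous_iff_continuousAt.2 fun x => (primHD h hh x).continuousAt
  have hφpos : ∀ s, 0 < φ s := fun s => by rw [hφ s]; exact Real.exp_pos _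
  have hφ' : φ = fun r => Real.exp (-(1/2) * ∫ s in (0:ℝ)..r, ap s) := funext hφ
  have hφd : ∀ x, HasDerivAt φ (-(1/2) * ap x * φ x) x := by
    intro x
    have h1 := ((primHD ap hapc x).const_mul (-(1/2) : ℝ)).exp
    rw [← hφ'] at h1
    have : Real.exp (-(1/2) * ∫ s in (0:ℝ)..x, ap s) = φ x := (hφ x).symm
    rw [this] at h1
    convert h1 using 1
    ring
  have hφc : Continuous φ := by
    rw [hφ']; exact Real.continuous_exp.comp (continuous_const.mul (primC ap hapc))
  have hΦ' : Φ = fun r => ∫ s in (0:ℝ)..r, φ s := funext hΦ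
  have hΦd : ∀ x, HasDerivAt Φ (φ x) x := by rw [hΦ']; exact primHD φ hφc
  have hΦc : Continuous Φ := by rw [hΦ']; exact primC φ hφc
  have hφne : ∀ s, φ s ≠ 0 := fun s => (hφpos s).ne'
  set q1 : ℝ → ℝ := fun s => Φ s / φ s with hq1
  set q2 : ℝ → ℝ := fun s => 1 / φ s with hq2
  have hq1c : Continuous q1 := hΦc.div hφc hφne
  have hq2c : Continuous q2 := continuous_const.div hφc hφne
  set I₁ : ℝ := ∫ s in (0:ℝ)..R₁, Φ s / φ s with hI₁
  set I₂ : ℝ := ∫ s in (0:ℝ)..R₁, 1 / φ s with hI₂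
  set G1 : ℝ → ℝ := fun u => ∫ s in (0:ℝ)..u, Φ s / φ s with hG1
  set G2 : ℝ → ℝ := fun u => ∫ s in (0:ℝ)..u, 1 / φ s with hG2
  have hG1c : Continuous G1 := primC q1 hq1c
  have hG2c : Continuous G2 := primC q2 hq2c
  have hgeq : ∀ u, g u = 1 - (1/4) * G1 (min u R₁) / I₁ - (1/4) * G2 (min u R₁) / I₂ :=
    fun u => hg u
  have hgc : Continuous g := by
    have : Continuous (fun u => 1 - (1/4) * G1 (min u R₁) / I₁
        - (1/4) * G2 (min u R₁) / I₂) := by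
      apply Continuous.sub
      apply Continuous.sub continuous_const
      · exact (continuous_const.mul (hG1c.comp (continuous_id.min continuous_const))).div_const _
      · exact (continuous_const.mul (hG2c.comp (continuous_id.min continuous_const))).div_const _
    exact this.congr fun u => (hgeq u).symm
  have hfd : ∀ x, HasDerivAt f (φ x * g x) x := by
    have hf' : f = fun r => ∫ s in (0:ℝ)..r, φ s * g s := funext hf
    rw [hf']; exact primHD _ (hφc.mul hgc)
  have hdf : deriv f = fun x => φ x * g x := funext fun x => (hfd x).deriv
  intro r hr hrR
  -- derivative of g at r
  have hev : g =ᶠ[nhds r] fun u => 1 - (1/4) * G1 u / I₁ - (1/4) * G2 u / I₂ := by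
    filter_upwards [Iio_mem_nhds hrR] with u hu
    rw [hgeq u, min_eq_left (le_of_lt hu)]
  have hgd : HasDerivAt g (0 - (1/4) * q1 r / I₁ - (1/4) * q2 r / I₂) r := by
    have h1 : HasDerivAt (fun u => 1 - (1/4) * G1 u / I₁ - (1/4) * G2 u / I₂)
        (0 - (1/4) * q1 r / I₁ - (1/4) * q2 r / I₂) r :=
      (((hasDerivAt_const r (1:ℝ)).sub
        (((primHD q1 hq1c r).const_mul (1/4 : ℝ)).div_const I₁)).sub
        (((primHD q2 hq2c r).const_mul (1/4 : ℝ)).div_const I₂))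
    exact h1.congr_of_eventuallyEq hev
  have hd2 : deriv (deriv f) r = (-(1/2) * ap r * φ r) * g r
      + φ r * (0 - (1/4) * q1 r / I₁ - (1/4) * q2 r / I₂) := by
    rw [hdf]; exact ((hφd r).mul hgd).deriv
  -- positivity facts
  have hR₁pos : 0 < R₁ := hr.trans hrR
  have hΦnn : ∀ s, 0 ≤ s → 0 ≤ Φ s := fun s hs => by
    rw [hΦ s]
    exact intervalIntegral.integral_nonneg hs fun x _ => (hφpos x).le
  have hΦpos : ∀ s, 0 < s → 0 < Φ s := fun s hs => by
    rw [hΦ s]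
    exact intervalIntegral.intervalIntegral_pos_of_pos
      (hφc.intervalIntegrable 0 s) hφpos hs
  have hI₁pos : 0 < I₁ := by
    rw [hI₁]
    apply intervalIntegral.intervalIntegral_pos_of_pos_on
      (hq1c.intervalIntegrable 0 R₁) _ hR₁pos
    intro x hx
    exact div_pos (hΦpos x hx.1) (hφpos x)
  have hI₂pos : 0 < I₂ := by
    rw [hI₂]
    apply intervalIntegral.intervalIntegral_pos_of_pos
      (hq2c.intervalIntegrable 0 R₁) _ hR₁pos
    intro x
    exact div_pos one_pos (hφpos x)
  have hcpos : 0 < c := by rw [hc]; positivity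
  -- g ≤ 1, hence f ≤ Φ
  have hg_le : ∀ s, 0 ≤ s → g s ≤ 1 := by
    intro s hs
    have hmin : 0 ≤ min s R₁ := le_min hs hR₁pos.le
    have h1 : 0 ≤ G1 (min s R₁) :=
      intervalIntegral.integral_nonneg hmin fun x hx =>
        div_nonneg (hΦnn x hx.1) (hφpos x).le
    have h2 : 0 ≤ G2 (min s R₁) :=
      intervalIntegral.integral_nonneg hmin fun x hx =>
        div_nonneg zero_le_one (hφpos x).le
    rw [hgeq s]
    have t1 : 0 ≤ (1/4) * G1 (min s R₁) / I₁ := by positivity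
    have t2 : 0 ≤ (1/4) * G2 (min s R₁) / I₂ := by positivity
    linarith
  have hfΦ : f r ≤ Φ r := by
    rw [hf r, hΦ r]
    apply intervalIntegral.integral_mono_on hr.le
      ((hφc.mul hgc).intervalIntegrable 0 r) (hφc.intervalIntegrable 0 r)
    intro x hx
    calc φ x * g x ≤ φ x * 1 :=
          mul_le_mul_of_nonneg_left (hg_le x hx.1) (hφpos x).le
      _ = φ x := mul_one _
  -- the key identity
  have hkey : 2 * deriv (deriv f) r + deriv f r * ap r = -(2 * I₂)⁻¹ - c * Φ r := by
    have hA : φ r * (Φ r / φ r) = Φ r := by rw [mul_comm]; exact div_mul_cancel₀ _ (hφne r)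
    have hB : φ r * (1 / φ r) = 1 := by rw [one_div, mul_inv_cancel₀ (hφne r)]
    rw [hd2, hdf]
    simp only [hq1, hq2, hc]
    linear_combination (-(1/2) * I₁⁻¹) * hA + (-(1/2) * I₂⁻¹) * hB
  have hεle : ε ≤ (2 * I₂)⁻¹ := by rw [hε]; exact min_le_left _ _
  constructor
  · rw [hkey]; linarith
  · have := mul_le_mul_of_nonneg_left hfΦ hcpos.le
    linarith
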